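/- arXiv:2307.15213 — 5 statements merged into one kernel-verified Lean document; each statement's English description precedes it below -/
import Mathlib

section
/- Let X ∈ ℝ^{n×p} have nonzero mean x̄, and let v̄₁ be a first (top) right singular vector of the centered matrix X̄ = X − 1_n x̄ᵀ. If v̄₁ is parallel to x̄, then z₀ = x̄/‖x̄‖ maximizes w ↦ wᵀXᵀXw over the unit sphere in ℝ^p; that is, z₀ is a top eigenvector of XᵀX, so the first right singular vectors of X and X̄ coincide (up to sign) with x̄/‖x̄‖. -/
open Matrix

lemma quad_form_eq {n p : ℕ} (A : Matrix (Fin n) (Fin p) ℝ) (w : Fin p → ℝ) :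
    w ⬝ᵥ (Aᵀ * A).mulVec w = (A.mulVec w) ⬝ᵥ (A.mulVec w) := by
  rw [← mulVec_mulVec, dotProduct_mulVec, vecMul_transpose]

/-- If the top right singular vector `v̄₁` of the centered
matrix `X̄` (a unit maximizer of `w ↦ wᵀX̄ᵀX̄w` over the unit sphere) is
parallel to the nonzero mean `x̄`, then `z₀ = x̄/‖x̄‖` maximizes
`w ↦ wᵀXᵀXw` over the unit sphere, i.e. it is a top eigenvector of `XᵀX`. -/
theorem mean_direction_maximizes_uncentered_rayleigh
    {n p : ℕ} (hn : 0 < n) (X : Matrix (Fin n) (Fin p) ℝ)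
    (xbar : Fin p → ℝ) (hxbar : xbar = fun j => (∑ i, X i j) / n)
    (hx : xbar ≠ 0)
    (Xbar : Matrix (Fin n) (Fin p) ℝ) (hXbar : Xbar = X - Matrix.vecMulVec (fun _ => 1) xbar)
    (z₀ : Fin p → ℝ) (hz₀ : z₀ = (Real.sqrt (xbar ⬝ᵥ xbar))⁻¹ • xbar)
    (vb1 : Fin p → ℝ) (hvb1_unit : vb1 ⬝ᵥ vb1 = 1)
    (hvb1_top : ∀ w : Fin p → ℝ, w ⬝ᵥ w = 1 →
      w ⬝ᵥ (Xbarᵀ * Xbar).mulVec w ≤ vb1 ⬝ᵥ (Xbarᵀ * Xbar).mulVec vb1)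
    (hparallel : vb1 = z₀ ∨ vb1 = -z₀) :
    ∀ w : Fin p → ℝ, w ⬝ᵥ w = 1 →
      w ⬝ᵥ (Xᵀ * X).mulVec w ≤ z₀ ⬝ᵥ (Xᵀ * X).mulVec z₀ := by
  have hn' : (n : ℝ) ≠ 0 := Nat.cast_ne_zero.mpr hn.ne'
  set s : ℝ := xbar ⬝ᵥ xbar with hs_def
  have hs_pos : 0 < s := by
    have h0 : 0 ≤ s := Finset.sum_nonneg fun i _ => mul_self_nonneg _
    have hne : s ≠ 0 := fun h => hx (dotProduct_self_eq_zero.mp h)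
    exact lt_of_le_of_ne h0 (Ne.symm hne)
  -- column sums of Xbar vanish
  have hcol : ∀ j, ∑ i, Xbar i j = 0 := by
    intro j
    simp only [hXbar, Matrix.sub_apply, vecMulVec_apply, one_mul, Finset.sum_sub_distrib,
      Finset.sum_const, Finset.card_univ, Fintype.card_fin, nsmul_eq_mul, hxbar]
    field_simp
    ring
  -- X.mulVec w decomposes
  have hdecomp : ∀ w (i : Fin n), X.mulVec w i = Xbar.mulVec w i + xbar ⬝ᵥ w := by
    intro w i
    simp only [hXbar, mulVec, dotProduct, Matrix.sub_apply, vecMulVec_apply, one_mul]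
    rw [← Finset.sum_add_distrib]
    congr 1; ext j; ring
  have hmean : ∀ w, ∑ i, Xbar.mulVec w i = 0 := by
    intro w
    simp only [mulVec, dotProduct]
    rw [Finset.sum_comm]
    exact Finset.sum_eq_zero fun j _ => by rw [← Finset.sum_mul, hcol, zero_mul]
  have key : ∀ w, w ⬝ᵥ (Xᵀ * X).mulVec w
      = w ⬝ᵥ (Xbarᵀ * Xbar).mulVec w + n * (xbar ⬝ᵥ w) ^ 2 := by
    intro w
    rw [quad_form_eq, quad_form_eq]
    have h1 := hmean w
    set c := xbar ⬝ᵥ w with hc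
    show ∑ i, X.mulVec w i * X.mulVec w i
      = (∑ i, Xbar.mulVec w i * Xbar.mulVec w i) + n * c ^ 2
    calc ∑ i, X.mulVec w i * X.mulVec w i
        = ∑ i, (Xbar.mulVec w i * Xbar.mulVec w i
            + (2 * c) * Xbar.mulVec w i + c^2) := by
          refine Finset.sum_congr rfl fun i _ => ?_
          rw [hdecomp w i]; ring
      _ = (∑ i, Xbar.mulVec w i * Xbar.mulVec w i)
            + (2 * c) * ∑ i, Xbar.mulVec w i + n * c^2 := by
          rw [Finset.sum_add_distrib, Finset.sum_add_distrib, ← Finset.mul_sum,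
            Finset.sum_const, Finset.card_univ, Fintype.card_fin, nsmul_eq_mul]
      _ = _ := by rw [h1, mul_zero, add_zero]
  -- properties of z₀
  have hsqrt : Real.sqrt s ^ 2 = s := Real.sq_sqrt hs_pos.le
  have hz₀_unit : z₀ ⬝ᵥ z₀ = 1 := by
    rw [hz₀, smul_dotProduct, dotProduct_smul, smul_eq_mul, smul_eq_mul, ← hs_def,
      ← mul_assoc, ← sq, ← Real.sqrt_inv, Real.sq_sqrt (by positivity)]
    field_simp
  have hxz : (xbar ⬝ᵥ z₀) ^ 2 = s := by
    rw [hz₀, dotProduct_smul, smul_eq_mul, ← hs_def, mul_pow, ← Real.sqrt_inv,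
      Real.sq_sqrt (by positivity)]
    field_simp
  -- quadratic form of Xbar at vb1 equals at z₀
  have hvb1_eq : vb1 ⬝ᵥ (Xbarᵀ * Xbar).mulVec vb1 = z₀ ⬝ᵥ (Xbarᵀ * Xbar).mulVec z₀ := by
    rcases hparallel with h | h
    · rw [h]
    · rw [h]; simp [neg_dotProduct, dotProduct_neg, mulVec_neg]
  intro w hw
  have hcs : (xbar ⬝ᵥ w) ^ 2 ≤ s := by
    have := Finset.sum_mul_sq_le_sq_mul_sq Finset.univ xbar w
    have hw2 : ∑ j, w j ^ 2 = 1 := by simpa [dotProduct, sq] using hw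
    have hs2 : ∑ j, xbar j ^ 2 = s := by simp [hs_def, dotProduct, sq]
    calc (xbar ⬝ᵥ w) ^ 2 = (∑ j, xbar j * w j) ^ 2 := rfl
      _ ≤ (∑ j, xbar j ^ 2) * ∑ j, w j ^ 2 := this
      _ = s := by rw [hw2, hs2, mul_one]
  calc w ⬝ᵥ (Xᵀ * X).mulVec w
      = w ⬝ᵥ (Xbarᵀ * Xbar).mulVec w + n * (xbar ⬝ᵥ w) ^ 2 := key w
    _ ≤ vb1 ⬝ᵥ (Xbarᵀ * Xbar).mulVec vb1 + n * s := by
        exact add_le_add (hvb1_top w hw) (mul_le_mul_of_nonneg_left hcs (Nat.cast_nonneg n))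
    _ = z₀ ⬝ᵥ (Xbarᵀ * Xbar).mulVec z₀ + n * (xbar ⬝ᵥ z₀) ^ 2 := by rw [hvb1_eq, hxz]
    _ = z₀ ⬝ᵥ (Xᵀ * X).mulVec z₀ := (key z₀).symm
end

section
/- Under the assumption that the top right singular vector v̄₁ of X̄ equals x̄/‖x̄‖, the uncentered matrix X admits the decomposition X = ∑_{i=2}^p σ̄_i ū_i v̄_iᵀ + √(σ̄₁² + n‖x̄‖²) · u* v̄₁ᵀ, where u* = (σ̄₁ū₁ + ‖x̄‖·1_n)/√(σ̄₁² + n‖x̄‖²) is a unit vector. In particular the SVDs of X and X̄ share all right singular vectors and all singular values except the first, which changes from σ̄₁ to √(σ̄₁² + n‖x̄‖²). -/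
open Matrix

/-- If in the SVD `X̄ = ∑ᵢ σ̄ᵢ ūᵢ v̄ᵢᵀ` of the centered matrix
the top right singular vector satisfies `v̄₁ = x̄/‖x̄‖` (and `ū₁ ⊥ 1ₙ`,
`‖ū₁‖ = 1`, `σ̄₁ ≥ 0`), then the uncentered matrix decomposes as
`X = ∑_{i≥2} σ̄ᵢ ūᵢ v̄ᵢᵀ + √(σ̄₁² + n‖x̄‖²) · u* v̄₁ᵀ` where
`u* = (σ̄₁ū₁ + ‖x̄‖·1ₙ)/√(σ̄₁² + n‖x̄‖²)` is a unit vector. -/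
theorem svd_uncentered_keeps_all_but_first
    {n p : ℕ} (hn : 0 < n) (hp : 0 < p) (X : Matrix (Fin n) (Fin p) ℝ)
    (xbar : Fin p → ℝ) (hxbar : xbar = fun j => (∑ i, X i j) / n)
    (hx : xbar ≠ 0)
    (Xbar : Matrix (Fin n) (Fin p) ℝ) (hXbar : Xbar = X - Matrix.vecMulVec (fun _ => 1) xbar)
    (σb : Fin p → ℝ) (ub : Fin p → Fin n → ℝ) (vb : Fin p → Fin p → ℝ)
    (hSVD : Xbar = ∑ i, σb i • Matrix.vecMulVec (ub i) (vb i))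
    (hσ1 : 0 ≤ σb ⟨0, hp⟩)
    (hu1_unit : ub ⟨0, hp⟩ ⬝ᵥ ub ⟨0, hp⟩ = 1)
    (hu1_ones : ub ⟨0, hp⟩ ⬝ᵥ (fun _ => (1 : ℝ)) = 0)
    (hv1 : vb ⟨0, hp⟩ = (Real.sqrt (xbar ⬝ᵥ xbar))⁻¹ • xbar)
    (ustar : Fin n → ℝ)
    (hustar : ustar = (Real.sqrt (σb ⟨0, hp⟩ ^ 2 + n * (xbar ⬝ᵥ xbar)))⁻¹ •
      (σb ⟨0, hp⟩ • ub ⟨0, hp⟩ + Real.sqrt (xbar ⬝ᵥ xbar) • (fun _ => (1 : ℝ)))) :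
    X = (∑ i ∈ Finset.univ.erase ⟨0, hp⟩, σb i • Matrix.vecMulVec (ub i) (vb i)) +
        Real.sqrt (σb ⟨0, hp⟩ ^ 2 + n * (xbar ⬝ᵥ xbar)) •
          Matrix.vecMulVec ustar (vb ⟨0, hp⟩) ∧
      ustar ⬝ᵥ ustar = 1 := by

  have hxx : 0 < xbar ⬝ᵥ xbar := by
    have hnn : 0 ≤ xbar ⬝ᵥ xbar := Finset.sum_nonneg fun i _ => mul_self_nonneg _
    rcases hnn.lt_or_eq with h | h
    · exact h
    · exact absurd (dotProduct_self_eq_zero.mp h.symm) hx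
  have hS : 0 < σb ⟨0, hp⟩ ^ 2 + n * (xbar ⬝ᵥ xbar) := by
    have : (0:ℝ) < n := by exact_mod_cast hn
    positivity
  have hsS : 0 < Real.sqrt (σb ⟨0, hp⟩ ^ 2 + n * (xbar ⬝ᵥ xbar)) := Real.sqrt_pos.mpr hS
  have hsx : 0 < Real.sqrt (xbar ⬝ᵥ xbar) := Real.sqrt_pos.mpr hxx
  constructor
  · have hX : X = Xbar + Matrix.vecMulVec (fun _ => (1:ℝ)) xbar := by
      rw [hXbar]; simp
    rw [hX, hSVD, ← Finset.sum_erase_add _ _ (Finset.mem_univ ⟨0, hp⟩), add_assoc]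
    congr 1
    ext i j
    simp only [Matrix.add_apply, Matrix.smul_apply, Matrix.vecMulVec_apply, hv1, hustar,
      Pi.smul_apply, Pi.add_apply, smul_eq_mul]
    have h1 : Real.sqrt (σb ⟨0, hp⟩ ^ 2 + n * (xbar ⬝ᵥ xbar)) *
        (Real.sqrt (σb ⟨0, hp⟩ ^ 2 + n * (xbar ⬝ᵥ xbar)))⁻¹ = 1 :=
      mul_inv_cancel₀ hsS.ne'
    have h2 : Real.sqrt (xbar ⬝ᵥ xbar) * (Real.sqrt (xbar ⬝ᵥ xbar))⁻¹ = 1 :=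
      mul_inv_cancel₀ hsx.ne'
    field_simp
  · rw [hustar]
    have hones : (fun _ => (1:ℝ)) ⬝ᵥ (fun _ : Fin n => (1:ℝ)) = n := by
      simp [dotProduct]
    have hcomm : (fun _ : Fin n => (1:ℝ)) ⬝ᵥ ub ⟨0, hp⟩ = 0 := by
      rw [dotProduct_comm]; exact hu1_ones
    simp only [smul_dotProduct, dotProduct_smul, add_dotProduct, dotProduct_add,
      hu1_unit, hu1_ones, hcomm, hones, smul_eq_mul]
    have hsq := Real.mul_self_sqrt hS.le
    have hxsq := Real.mul_self_sqrt hxx.le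
    field_simp
    nlinarith [hsq, hxsq]
end

section
/- Let z ∈ ℝ^p be any unit vector and z₀ = x̄/‖x̄‖ the unit mean direction of X ∈ ℝ^{n×p}. If ‖x̄‖² ≥ (σ̄_max² − σ̄_min²) / (n(1 − ⟨z₀, z⟩²)), where σ̄_max² and σ̄_min² are the largest and smallest eigenvalues of X̄ᵀX̄, then ‖Xz‖² ≤ ‖Xz₀‖², i.e., z₀ dominates z in the Rayleigh quotient of XᵀX. -/
open Matrix

/-- Let `z` be a unit vector and `z₀ = x̄/‖x̄‖` the unit mean
direction. If `‖x̄‖² ≥ (σ̄_max² − σ̄_min²)/(n(1 − ⟨z₀,z⟩²))`, where `σ̄_max²`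
and `σ̄_min²` are the largest and smallest eigenvalues (extreme Rayleigh values)
of `X̄ᵀX̄`, then `‖Xz‖² ≤ ‖Xz₀‖²`. -/
theorem mean_direction_dominates_rayleigh
    {n p : ℕ} (hn : 0 < n) (X : Matrix (Fin n) (Fin p) ℝ)
    (xbar : Fin p → ℝ) (hxbar : xbar = fun j => (∑ i, X i j) / n)
    (hx : xbar ≠ 0)
    (Xbar : Matrix (Fin n) (Fin p) ℝ) (hXbar : Xbar = X - Matrix.vecMulVec (fun _ => 1) xbar)
    (z₀ : Fin p → ℝ) (hz₀ : z₀ = (Real.sqrt (xbar ⬝ᵥ xbar))⁻¹ • xbar)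
    (z : Fin p → ℝ) (hz : z ⬝ᵥ z = 1) (hzz₀ : (z₀ ⬝ᵥ z) ^ 2 < 1)
    (smax2 smin2 : ℝ)
    (hmax : IsGreatest {r : ℝ | ∃ w : Fin p → ℝ, w ⬝ᵥ w = 1 ∧
      w ⬝ᵥ (Xbarᵀ * Xbar).mulVec w = r} smax2)
    (hmin : IsLeast {r : ℝ | ∃ w : Fin p → ℝ, w ⬝ᵥ w = 1 ∧
      w ⬝ᵥ (Xbarᵀ * Xbar).mulVec w = r} smin2)
    (hbound : xbar ⬝ᵥ xbar ≥ (smax2 - smin2) / (n * (1 - (z₀ ⬝ᵥ z) ^ 2))) :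
    (X.mulVec z) ⬝ᵥ (X.mulVec z) ≤ (X.mulVec z₀) ⬝ᵥ (X.mulVec z₀) := by
  have hn' : (n : ℝ) ≠ 0 := Nat.cast_ne_zero.mpr hn.ne'
  have hxx : 0 < xbar ⬝ᵥ xbar := by
    have hnn : 0 ≤ xbar ⬝ᵥ xbar := Finset.sum_nonneg fun i _ => mul_self_nonneg _
    rcases lt_or_eq_of_le hnn with h | h
    · exact h
    · exact absurd ((dotProduct_self_eq_zero).mp h.symm) hx
  set s : ℝ := Real.sqrt (xbar ⬝ᵥ xbar) with hs
  have hs2 : s ^ 2 = xbar ⬝ᵥ xbar := Real.sq_sqrt hxx.le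
  have hspos : 0 < s := Real.sqrt_pos.mpr hxx
  -- z₀ is a unit vector
  have hz₀z₀ : z₀ ⬝ᵥ z₀ = 1 := by
    rw [hz₀]
    rw [smul_dotProduct, dotProduct_smul]
    rw [smul_eq_mul, smul_eq_mul, ← hs2]
    field_simp
  -- column sums of Xbar are zero
  have hcol : Matrix.vecMul (fun _ : Fin n => (1:ℝ)) Xbar = 0 := by
    funext j
    simp only [hXbar, Matrix.vecMul, dotProduct, Matrix.sub_apply, Matrix.vecMulVec_apply,
      one_mul, Finset.sum_sub_distrib]
    rw [hxbar]
    simp only [Finset.sum_const, Finset.card_univ, Fintype.card_fin, nsmul_eq_mul, Pi.zero_apply]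
    rw [mul_div_assoc', mul_div_cancel_left₀ _ hn', sub_self]
  -- decomposition
  have hdec : ∀ w : Fin p → ℝ,
      (X.mulVec w) ⬝ᵥ (X.mulVec w)
        = (Xbar.mulVec w) ⬝ᵥ (Xbar.mulVec w) + n * (xbar ⬝ᵥ w) ^ 2 := by
    intro w
    have hX : X.mulVec w = Xbar.mulVec w + (xbar ⬝ᵥ w) • (fun _ : Fin n => (1:ℝ)) := by
      funext i
      simp [hXbar, Matrix.mulVec, dotProduct, Matrix.sub_apply, Matrix.vecMulVec_apply,
        sub_mul, Finset.sum_sub_distrib, Finset.mul_sum]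
    have hone : (fun _ : Fin n => (1:ℝ)) ⬝ᵥ Xbar.mulVec w = 0 := by
      rw [Matrix.dotProduct_mulVec, hcol, zero_dotProduct]
    have hone' : Xbar.mulVec w ⬝ᵥ (fun _ : Fin n => (1:ℝ)) = 0 := by
      rw [dotProduct_comm]; exact hone
    have h11 : (fun _ : Fin n => (1:ℝ)) ⬝ᵥ (fun _ : Fin n => (1:ℝ)) = n := by
      simp [dotProduct]
    rw [hX, add_dotProduct, dotProduct_add, dotProduct_add,
      smul_dotProduct, dotProduct_smul, smul_dotProduct,
      dotProduct_smul, hone, hone', h11]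
    simp only [smul_eq_mul]
    ring
  -- quadratic form equals norm squared
  have hquad : ∀ w : Fin p → ℝ,
      w ⬝ᵥ (Xbarᵀ * Xbar).mulVec w = (Xbar.mulVec w) ⬝ᵥ (Xbar.mulVec w) := by
    intro w
    rw [← Matrix.mulVec_mulVec, Matrix.dotProduct_mulVec, Matrix.vecMul_transpose]
  -- Rayleigh bounds
  have hzmax : (Xbar.mulVec z) ⬝ᵥ (Xbar.mulVec z) ≤ smax2 := by
    have := hmax.2 ⟨z, hz, rfl⟩
    rw [hquad z] at this; exact this
  have hz₀min : smin2 ≤ (Xbar.mulVec z₀) ⬝ᵥ (Xbar.mulVec z₀) := by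
    have := hmin.2 ⟨z₀, hz₀z₀, rfl⟩
    rw [hquad z₀] at this; exact this
  -- inner products with xbar
  have hxz₀ : xbar ⬝ᵥ z₀ = s := by
    rw [hz₀, dotProduct_smul]
    rw [smul_eq_mul]
    field_simp
    nlinarith [hs2]
  have hxz : xbar ⬝ᵥ z = s * (z₀ ⬝ᵥ z) := by
    rw [hz₀, smul_dotProduct, smul_eq_mul, ← mul_assoc,
      mul_inv_cancel₀ hspos.ne', one_mul]
  set c : ℝ := z₀ ⬝ᵥ z with hc
  have hden : 0 < (n : ℝ) * (1 - c ^ 2) := by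
    have : 0 < (n : ℝ) := Nat.cast_pos.mpr hn
    nlinarith [hzz₀]
  have hb : smax2 - smin2 ≤ (xbar ⬝ᵥ xbar) * ((n : ℝ) * (1 - c ^ 2)) := by
    rw [ge_iff_le, div_le_iff₀ hden] at hbound
    exact hbound
  rw [hdec z, hdec z₀, hxz₀, hxz]
  nlinarith [hzmax, hz₀min, hb, hs2]
end

section
/- Fix ε ∈ (0,1) and let U_ε = {u ∈ S^{p−1} : |uᵀz₀| ≥ 1 − ε} where z₀ = x̄/‖x̄‖. If ‖x̄‖² ≥ (σ̄_max² − σ̄_min²)/(n(1 − (1−ε)²)), then every maximizer v₁ of ‖Xz‖ over the unit sphere (i.e., every top right singular vector of the uncentered matrix X) lies in U_ε. -/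
open Matrix

/-- Fix `ε ∈ (0,1)` and let
`U_ε = {u : ‖u‖ = 1, |uᵀz₀| ≥ 1 − ε}` with `z₀ = x̄/‖x̄‖`.
If `‖x̄‖² ≥ (σ̄_max² − σ̄_min²)/(n(1 − (1−ε)²))`, then every unit maximizer
`v₁` of `‖Xz‖` over the unit sphere (top right singular vector of the
uncentered matrix `X`) satisfies `|v₁ᵀz₀| ≥ 1 − ε`, i.e. `v₁ ∈ U_ε`. -/
theorem top_singular_vector_near_mean_direction
    {n p : ℕ} (hn : 0 < n) (X : Matrix (Fin n) (Fin p) ℝ)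
    (xbar : Fin p → ℝ) (hxbar : xbar = fun j => (∑ i, X i j) / n)
    (hx : xbar ≠ 0)
    (Xbar : Matrix (Fin n) (Fin p) ℝ) (hXbar : Xbar = X - Matrix.vecMulVec (fun _ => 1) xbar)
    (z₀ : Fin p → ℝ) (hz₀ : z₀ = (Real.sqrt (xbar ⬝ᵥ xbar))⁻¹ • xbar)
    (ε : ℝ) (hε : ε ∈ Set.Ioo (0 : ℝ) 1)
    (smax2 smin2 : ℝ)
    (hmax : IsGreatest {r : ℝ | ∃ w : Fin p → ℝ, w ⬝ᵥ w = 1 ∧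
      w ⬝ᵥ (Xbarᵀ * Xbar).mulVec w = r} smax2)
    (hmin : IsLeast {r : ℝ | ∃ w : Fin p → ℝ, w ⬝ᵥ w = 1 ∧
      w ⬝ᵥ (Xbarᵀ * Xbar).mulVec w = r} smin2)
    (hbound : xbar ⬝ᵥ xbar ≥ (smax2 - smin2) / (n * (1 - (1 - ε) ^ 2))) :
    ∀ v₁ : Fin p → ℝ, v₁ ⬝ᵥ v₁ = 1 →
      (∀ z : Fin p → ℝ, z ⬝ᵥ z = 1 →
        (X.mulVec z) ⬝ᵥ (X.mulVec z) ≤ (X.mulVec v₁) ⬝ᵥ (X.mulVec v₁)) →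
      |v₁ ⬝ᵥ z₀| ≥ 1 - ε := by
  intro v₁ hv₁ hvmax
  set m : ℝ := xbar ⬝ᵥ xbar with hm
  have hmpos : 0 < m := by
    have : xbar ⬝ᵥ xbar ≠ 0 := by
      intro h
      exact hx (by
        funext j
        have := dotProduct_self_eq_zero.mp h
        exact congrFun this j)
    have hnn : 0 ≤ xbar ⬝ᵥ xbar :=
      Finset.sum_nonneg fun i _ => mul_self_nonneg _
    rcases lt_or_eq_of_le hnn with h | h
    · exact h
    · exact absurd h.symm this
  have hsm : Real.sqrt m * Real.sqrt m = m := Real.mul_self_sqrt hmpos.le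
  have hsmpos : 0 < Real.sqrt m := Real.sqrt_pos.mpr hmpos
  -- column sums of Xbar vanish
  have hcol : ∀ j, ∑ i, Xbar i j = 0 := by
    intro j
    have hnne : (n : ℝ) ≠ 0 := Nat.cast_ne_zero.mpr hn.ne'
    simp [hXbar, Matrix.sub_apply, Matrix.vecMulVec_apply, Finset.sum_sub_distrib, hxbar,
      Finset.sum_const, Finset.card_univ, mul_div_assoc, mul_div_cancel₀ _ hnne]
  -- quadratic form equals norm squared of Xbar z
  have hQ : ∀ z : Fin p → ℝ, z ⬝ᵥ (Xbarᵀ * Xbar).mulVec z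
      = ∑ i, (Xbar.mulVec z i) ^ 2 := by
    intro z
    rw [← Matrix.mulVec_mulVec, Matrix.dotProduct_mulVec, Matrix.vecMul_transpose]
    simp [dotProduct, sq]
  -- key decomposition
  have hdecomp : ∀ z : Fin p → ℝ,
      (X.mulVec z) ⬝ᵥ (X.mulVec z)
        = z ⬝ᵥ (Xbarᵀ * Xbar).mulVec z + n * (xbar ⬝ᵥ z) ^ 2 := by
    intro z
    have hXz : ∀ i, X.mulVec z i = Xbar.mulVec z i + xbar ⬝ᵥ z := by
      intro i
      simp [hXbar, Matrix.mulVec, dotProduct, Matrix.sub_apply,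
        Matrix.vecMulVec_apply, sub_mul, Finset.sum_sub_distrib, sub_add_cancel]
    have hsum0 : ∑ i, Xbar.mulVec z i = 0 := by
      simp only [Matrix.mulVec, dotProduct]
      rw [Finset.sum_comm]
      simp [← Finset.sum_mul, hcol]
    have : (X.mulVec z) ⬝ᵥ (X.mulVec z)
        = ∑ i, ((Xbar.mulVec z i) ^ 2 + 2 * (xbar ⬝ᵥ z) * Xbar.mulVec z i
            + (xbar ⬝ᵥ z) ^ 2) := by
      simp only [dotProduct, hXz]
      congr 1; funext i; ring
    rw [this, Finset.sum_add_distrib, Finset.sum_add_distrib, ← Finset.mul_sum, hsum0,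
      Finset.sum_const, Finset.card_univ, Fintype.card_fin, hQ]
    push_cast; ring
  -- z₀ facts
  have hz0unit : z₀ ⬝ᵥ z₀ = 1 := by
    simp [hz₀, dotProduct_smul, smul_dotProduct, smul_eq_mul, ← hm]
    field_simp
    rw [sq, hsm]
  have hxz0 : xbar ⬝ᵥ z₀ = Real.sqrt m := by
    simp [hz₀, dotProduct_smul, smul_eq_mul, ← hm]
    field_simp
    rw [sq, hsm]
  have hvz0 : v₁ ⬝ᵥ z₀ = (Real.sqrt m)⁻¹ * (xbar ⬝ᵥ v₁) := by
    simp [hz₀, dotProduct_smul, smul_eq_mul, dotProduct_comm v₁ xbar]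
  -- bounds from hmax/hmin
  have hQv : v₁ ⬝ᵥ (Xbarᵀ * Xbar).mulVec v₁ ≤ smax2 :=
    hmax.2 ⟨v₁, hv₁, rfl⟩
  have hQz : smin2 ≤ z₀ ⬝ᵥ (Xbarᵀ * Xbar).mulVec z₀ :=
    hmin.2 ⟨z₀, hz0unit, rfl⟩
  -- maximality comparison
  have hcomp := hvmax z₀ hz0unit
  rw [hdecomp z₀, hdecomp v₁] at hcomp
  have hnpos : (0 : ℝ) < n := Nat.cast_pos.mpr hn
  have hεpos : 0 < 1 - (1 - ε) ^ 2 := by nlinarith [hε.1, hε.2]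
  have hdiff : smax2 - smin2 ≤ n * (1 - (1 - ε) ^ 2) * m := by
    have hden : 0 < (n : ℝ) * (1 - (1 - ε) ^ 2) := by positivity
    rw [ge_iff_le, div_le_iff₀ hden] at hbound
    linarith
  have hkey : (n : ℝ) * m * (1 - ε) ^ 2 ≤ n * (xbar ⬝ᵥ v₁) ^ 2 := by
    rw [hxz0] at hcomp
    nlinarith [hcomp, hQv, hQz, hsm]
  have hc2 : (1 - ε) ^ 2 ≤ (v₁ ⬝ᵥ z₀) ^ 2 := by
    rw [hvz0]
    have h1 : ((Real.sqrt m)⁻¹ * (xbar ⬝ᵥ v₁)) ^ 2 = (xbar ⬝ᵥ v₁) ^ 2 / m := by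
      rw [mul_pow, inv_pow, sq (Real.sqrt m), hsm]
      ring
    rw [h1, le_div_iff₀ hmpos]
    have h2 : (n : ℝ) * ((1 - ε) ^ 2 * m) ≤ n * (xbar ⬝ᵥ v₁) ^ 2 := by
      have hr : (n : ℝ) * ((1 - ε) ^ 2 * m) = n * m * (1 - ε) ^ 2 := by ring
      rw [hr]; exact hkey
    exact le_of_mul_le_mul_left h2 hnpos
  have h1ε : 0 ≤ 1 - ε := by linarith [hε.2]
  nlinarith [sq_abs (v₁ ⬝ᵥ z₀), abs_nonneg (v₁ ⬝ᵥ z₀), hc2, h1ε]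
end

section
/- Let D, μ, ρ be as in the DPR1 setting (D diagonal with strictly decreasing entries d₁ > ... > d_p, all μ_j ≠ 0, ρ > 0). Then λ is an eigenvalue of D + ρμμᵀ if and only if λ ∉ {d₁,...,d_p} and w(λ) = 1 + ρ∑_{j=1}^p μ_j²/(d_j − λ) = 0; moreover a corresponding eigenvector is (D − λI)^{−1}μ. -/
open Matrix

/-- **secular equation for DPR1 matrices.** With `D = diag(d)`,
`d₁ > ... > d_p`, all `μ_j ≠ 0` and `ρ > 0`: `λ` is an eigenvalue of
`D + ρμμᵀ` iff `λ ∉ {d₁,...,d_p}` and the secular function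
`w(λ) = 1 + ρ∑_j μ_j²/(d_j − λ)` vanishes at `λ`; moreover, in that case
`(D − λI)⁻¹μ` (with entries `μ_j/(d_j − λ)`) is a corresponding eigenvector. -/
theorem dpr1_secular_equation
    {p : ℕ} (hp : 2 ≤ p) (d : Fin p → ℝ) (hd : StrictAnti d)
    (μ : Fin p → ℝ) (hμ : ∀ j, μ j ≠ 0) (ρ : ℝ) (hρ : 0 < ρ) (lam : ℝ) :
    (lam ∈ spectrum ℝ (Matrix.diagonal d + ρ • Matrix.vecMulVec μ μ) ↔
      ((∀ j, lam ≠ d j) ∧ 1 + ρ * ∑ j, μ j ^ 2 / (d j - lam) = 0)) ∧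
    (((∀ j, lam ≠ d j) ∧ 1 + ρ * ∑ j, μ j ^ 2 / (d j - lam) = 0) →
      (Matrix.diagonal d + ρ • Matrix.vecMulVec μ μ).mulVec
          (fun j => μ j / (d j - lam))
        = lam • (fun j => μ j / (d j - lam))) := by
  set A := Matrix.diagonal d + ρ • Matrix.vecMulVec μ μ with hA
  have hAv : ∀ v : Fin p → ℝ,
      A.mulVec v = fun i => d i * v i + ρ * (μ i * ∑ j, μ j * v j) := by
    intro v
    funext i
    simp only [hA, Matrix.add_mulVec, Matrix.smul_mulVec, Pi.add_apply,
      Matrix.mulVec_diagonal, Pi.smul_apply, smul_eq_mul]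
    congr 1
    simp [Matrix.mulVec, dotProduct, Matrix.vecMulVec_apply, Finset.mul_sum,
      mul_assoc]
  -- second part first
  have hsecond : ((∀ j, lam ≠ d j) ∧ 1 + ρ * ∑ j, μ j ^ 2 / (d j - lam) = 0) →
      A.mulVec (fun j => μ j / (d j - lam)) = lam • (fun j => μ j / (d j - lam)) := by
    rintro ⟨hne, hw⟩
    have hdl : ∀ j, d j - lam ≠ 0 := fun j => sub_ne_zero.mpr (fun h => hne j h.symm)
    have hS : ∑ j, μ j * (μ j / (d j - lam)) = -1 / ρ := by
      have h2 : ∑ j, μ j * (μ j / (d j - lam)) = ∑ j, μ j ^ 2 / (d j - lam) := by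
        refine Finset.sum_congr rfl fun j _ => by ring
      rw [h2, eq_div_iff hρ.ne']
      linear_combination hw
    rw [hAv]
    funext i
    simp only [Pi.smul_apply, smul_eq_mul, hS]
    have h1 : ρ * (μ i * (-1 / ρ)) = -μ i := by field_simp
    rw [h1]
    field_simp [hdl i]
    ring
  have hspec : lam ∈ spectrum ℝ A ↔ ∃ v, v ≠ 0 ∧ A.mulVec v = lam • v := by
    rw [spectrum.mem_iff, Matrix.isUnit_iff_isUnit_det, isUnit_iff_ne_zero, not_not,
      ← Matrix.exists_mulVec_eq_zero_iff]
    constructor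
    · rintro ⟨v, hv0, hv⟩
      refine ⟨v, hv0, ?_⟩
      have : (algebraMap ℝ (Matrix (Fin p) (Fin p) ℝ) lam - A).mulVec v
          = lam • v - A.mulVec v := by
        rw [Matrix.sub_mulVec]
        congr 1
        funext k; simp [Matrix.algebraMap_eq_diagonal, Matrix.mulVec_diagonal]
      rw [this, sub_eq_zero] at hv
      exact hv.symm
    · rintro ⟨v, hv0, hv⟩
      refine ⟨v, hv0, ?_⟩
      rw [Matrix.sub_mulVec]
      have : (algebraMap ℝ (Matrix (Fin p) (Fin p) ℝ) lam).mulVec v = lam • v := by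
        funext k; simp [Matrix.algebraMap_eq_diagonal, Matrix.mulVec_diagonal]
      rw [this, hv, sub_self]
  constructor
  · rw [hspec]
    constructor
    · rintro ⟨v, hv0, hv⟩
      set S := ∑ j, μ j * v j with hSdef
      have he : ∀ i, d i * v i + ρ * (μ i * S) = lam * v i := by
        intro i
        have := congrFun hv i
        rw [hAv] at this
        simpa using this
      have hne : ∀ j, lam ≠ d j := by
        intro i hlam
        have hS0 : S = 0 := by
          have := he i
          rw [hlam] at this
          have h2 : ρ * (μ i * S) = 0 := by linarith
          rcases mul_eq_zero.mp h2 with h | h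
          · exact absurd h hρ.ne'
          · rcases mul_eq_zero.mp h with h | h
            · exact absurd h (hμ i)
            · exact h
        have hvz : ∀ j, j ≠ i → v j = 0 := by
          intro j hj
          have := he j
          rw [hS0] at this
          have h3 : (d j - lam) * v j = 0 := by ring_nf; linarith
          have hdj : d j - lam ≠ 0 := by
            rw [hlam]
            exact sub_ne_zero.mpr (fun h => hj (hd.injective h))
          exact (mul_eq_zero.mp h3).resolve_left hdj
        have hvi : v i = 0 := by
          have : S = μ i * v i := by
            rw [hSdef]
            rw [Finset.sum_eq_single i]
            · intro j _ hj; rw [hvz j hj, mul_zero]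
            · intro h; exact absurd (Finset.mem_univ i) h
          rw [hS0] at this
          exact (mul_eq_zero.mp this.symm).resolve_left (hμ i)
        apply hv0
        funext j
        by_cases hj : j = i
        · rw [hj]; exact hvi
        · exact hvz j hj
      refine ⟨hne, ?_⟩
      have hdl : ∀ j, d j - lam ≠ 0 := fun j => sub_ne_zero.mpr (fun h => hne j h.symm)
      have hSne : S ≠ 0 := by
        intro hS0
        apply hv0
        funext j
        have := he j
        rw [hS0] at this
        have h3 : (d j - lam) * v j = 0 := by ring_nf; linarith
        exact (mul_eq_zero.mp h3).resolve_left (hdl j)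
      have hkey : ∀ j, ρ * S * (μ j ^ 2 / (d j - lam)) = -(μ j * v j) := by
        intro j
        have hj := he j
        have h4 : ρ * (μ j * S) = (lam - d j) * v j := by linarith
        field_simp [hdl j]
        linear_combination μ j * h4
      have hsum : ρ * S * ∑ j, μ j ^ 2 / (d j - lam) = -S := by
        calc ρ * S * ∑ j, μ j ^ 2 / (d j - lam)
            = ∑ j, ρ * S * (μ j ^ 2 / (d j - lam)) := Finset.mul_sum _ _ _
          _ = ∑ j, -(μ j * v j) := Finset.sum_congr rfl fun j _ => hkey j
          _ = -S := by rw [hSdef]; exact Finset.sum_neg_distrib _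
      have : S * (1 + ρ * ∑ j, μ j ^ 2 / (d j - lam)) = 0 := by
        ring_nf
        ring_nf at hsum
        linarith
      have := (mul_eq_zero.mp this).resolve_left hSne
      linarith
    · intro h
      refine ⟨fun j => μ j / (d j - lam), ?_, hsecond h⟩
      intro hv
      have h0 := congrFun hv ⟨0, by omega⟩
      have hdl : d ⟨0, by omega⟩ - lam ≠ 0 := sub_ne_zero.mpr (fun hh => h.1 _ hh.symm)
      simp only [Pi.zero_apply] at h0
      exact hμ _ (by field_simp at h0; simpa using h0)
  · exact hsecond
end
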